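/- Let m ≥ 1 be an integer and λ ≥ 0, and let K ⊆ ℝ² be a compact set with at most m connected components and ℋ¹(K) ≤ λ. Let U and V be open subsets of ℝ² with U ⊆ V and δ := dist(U, ∂V) > 0. Then the number of connected components of V̄ ∩ K which intersect U ∩ K is at most m + λ/δ. -/

import Mathlib

open MeasureTheory Filter Set
open scoped Classical

noncomputable section

/-- The plane `ℝ²`. -/
abbrev E2 : Type := EuclideanSpace ℝ (Fin 2)

/-- Distance from a point to a set, with the convention `dist(x, ∅) = diam Ω`. -/
def distIn (Ω : Set E2) (x : E2) (S : Set E2) : ℝ :=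
  if S = ∅ then Metric.diam Ω else Metric.infDist x S

/-- Hausdorff distance between subsets of `closure Ω`, with the conventions
`dist(x, ∅) = diam Ω` and `sup ∅ = 0`. -/
def hausDistIn (Ω K₁ K₂ : Set E2) : ℝ :=
  max (sSup ((fun x => distIn Ω x K₂) '' K₁)) (sSup ((fun x => distIn Ω x K₁) '' K₂))

/-- Convergence of a sequence of compact subsets of `closure Ω` in the Hausdorff metric. -/
def TendstoHausdorff (Ω : Set E2) (K : ℕ → Set E2) (L : Set E2) : Prop :=
  Filter.Tendsto (fun n => hausDistIn Ω (K n) L) Filter.atTop (nhds 0)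

/-- `K` has at most `m` connected components: it is the union of `m` preconnected sets. -/
def AtMostComponents (m : ℕ) (K : Set E2) : Prop :=
  ∃ C : Fin m → Set E2, (∀ i, IsPreconnected (C i)) ∧ K = ⋃ i, C i

lemma hausdorff_ge_dist' {C : Set E2} (hC : IsPreconnected C) {a b : E2}
    (ha : a ∈ C) (hb : b ∈ C) : ENNReal.ofReal (dist a b) ≤ μH[1] C := by
  rcases eq_or_ne a b with rfl | hab
  · simp
  have hba : b - a ≠ 0 := sub_ne_zero.2 (Ne.symm hab)
  have hnorm : (0:ℝ) < ‖b - a‖ := norm_pos_iff.2 hba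
  set u : E2 := ‖b - a‖⁻¹ • (b - a) with hu
  have hunorm : ‖u‖ = 1 := by
    rw [hu, norm_smul, norm_inv, norm_norm, inv_mul_cancel₀ hnorm.ne']
  set f : E2 → ℝ := fun z => inner ℝ u z with hf
  have hlip : LipschitzWith 1 f := by
    refine LipschitzWith.of_dist_le_mul fun z w => ?_
    rw [Real.dist_eq, NNReal.coe_one, one_mul, dist_eq_norm]
    have h1 : f z - f w = (inner ℝ u (z - w) : ℝ) := by simp [hf, inner_sub_right]
    rw [h1]
    calc |(inner ℝ u (z - w) : ℝ)| ≤ ‖u‖ * ‖z - w‖ := abs_real_inner_le_norm u (z - w)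
      _ = ‖z - w‖ := by rw [hunorm, one_mul]
  have key : μH[1] (f '' C) ≤ μH[1] C := by
    simpa using hlip.hausdorffMeasure_image_le (zero_le_one) C
  have himg : IsPreconnected (f '' C) := hC.image f hlip.continuous.continuousOn
  have hfb : f b - f a = ‖b - a‖ := by
    have : f b - f a = (inner ℝ u (b - a) : ℝ) := by simp [hf, inner_sub_right]
    rw [this, hu, real_inner_smul_left, real_inner_self_eq_norm_mul_norm]
    field_simp
  have hIcc : Icc (f a) (f b) ⊆ f '' C :=
    himg.Icc_subset (mem_image_of_mem f ha) (mem_image_of_mem f hb)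
  have hvol : ENNReal.ofReal (dist a b) ≤ μH[1] (f '' C) := by
    calc ENNReal.ofReal (dist a b) = volume (Icc (f a) (f b)) := by
          rw [Real.volume_Icc, hfb, dist_eq_norm, norm_sub_rev]
      _ = μH[1] (Icc (f a) (f b)) := by rw [MeasureTheory.hausdorffMeasure_real]
      _ ≤ μH[1] (f '' C) := measure_mono hIcc
  exact hvol.trans key

lemma isCompact_cci' {F : Set E2} (hF : IsCompact F) (x : E2) :
    IsCompact (connectedComponentIn F x) := by
  by_cases hx : x ∈ F
  · rw [connectedComponentIn_eq_image hx]
    have : CompactSpace F := isCompact_iff_compactSpace.1 hF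
    exact isClosed_connectedComponent.isCompact.image continuous_subtype_val
  · rw [connectedComponentIn_eq_empty hx]; exact isCompact_empty

lemma bumping' {D V : Set E2} (hD : IsCompact D) (hDc : IsPreconnected D)
    (hV : IsOpen V) {x y : E2} (hx : x ∈ D ∩ closure V) (hy : y ∈ D) (hy' : y ∉ closure V) :
    (connectedComponentIn (D ∩ closure V) x ∩ frontier V).Nonempty := by
  by_contra hcon
  rw [Set.not_nonempty_iff_eq_empty] at hcon
  set F : Set E2 := D ∩ closure V with hFdef
  have hFc : IsCompact F := hD.inter_right isClosed_closure
  haveI : CompactSpace F := isCompact_iff_compactSpace.1 hFc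
  set x' : F := ⟨x, hx⟩ with hx'
  -- the component in the subtype avoids the frontier
  set B : Set F := Subtype.val ⁻¹' frontier V with hB
  have hBclosed : IsClosed B := (isClosed_frontier).preimage continuous_subtype_val
  have hccB : connectedComponent x' ∩ B = ∅ := by
    rw [Set.eq_empty_iff_forall_notMem]
    rintro z ⟨hz1, hz2⟩
    have : (z : E2) ∈ connectedComponentIn F x ∩ frontier V := by
      refine ⟨?_, hz2⟩
      rw [connectedComponentIn_eq_image hx]
      exact ⟨z, hz1, rfl⟩
    rw [hcon] at this
    exact this
  -- extract a clopen set disjoint from B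
  have hiInter := connectedComponent_eq_iInter_isClopen x'
  have hBint : B ∩ ⋂ (Z : { Z : Set F // IsClopen Z ∧ x' ∈ Z }), Z = ∅ := by
    rw [Set.inter_comm, ← hiInter]
    exact hccB
  obtain ⟨fin, hfin⟩ :=
    hBclosed.isCompact.elim_finite_subfamily_closed
      (fun Z : { Z : Set F // IsClopen Z ∧ x' ∈ Z } => (Z : Set F))
      (fun Z => Z.2.1.1) hBint
  set Q : Set F := ⋂ Z ∈ fin, (Z : Set F) with hQdef
  have hQclopen : IsClopen Q := isClopen_biInter_finset fun Z _ => Z.2.1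
  have hxQ : x' ∈ Q := Set.mem_iInter₂.2 fun Z _ => Z.2.2
  have hQB : Q ∩ B = ∅ := by rw [Set.inter_comm]; exact hfin
  set Q' : Set E2 := Subtype.val '' Q with hQ'def
  have hQ'comp : IsCompact Q' :=
    (hQclopen.1.isCompact).image continuous_subtype_val
  have hQ'V : Q' ⊆ V := by
    rintro z ⟨q, hq, rfl⟩
    have hzc : (q : E2) ∈ closure V := q.2.2
    have hznf : (q : E2) ∉ frontier V := by
      intro hzf
      have : q ∈ Q ∩ B := ⟨hq, hzf⟩
      rw [hQB] at this; exact this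
    have : (q : E2) ∈ interior V := by
      rw [← closure_diff_frontier]; exact ⟨hzc, hznf⟩
    exact interior_subset this
  obtain ⟨O, hOopen, hOQ⟩ : ∃ O : Set E2, IsOpen O ∧ Subtype.val ⁻¹' O = Q :=
    isOpen_induced_iff.1 hQclopen.2
  have hQ'eq : Q' = D ∩ (O ∩ V) := by
    apply Set.Subset.antisymm
    · rintro z ⟨q, hq, rfl⟩
      refine ⟨q.2.1, ?_, hQ'V ⟨q, hq, rfl⟩⟩
      rw [← hOQ] at hq; exact hq
    · rintro z ⟨hzD, hzO, hzV⟩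
      have hzF : z ∈ F := ⟨hzD, subset_closure hzV⟩
      refine ⟨⟨z, hzF⟩, ?_, rfl⟩
      rw [← hOQ]; exact hzO
  -- split D with the clopen Q'
  have hsplit := isPreconnected_iff_subset_of_disjoint.1 hDc (O ∩ V) Q'ᶜ
    (hOopen.inter hV) hQ'comp.isClosed.isOpen_compl ?_ ?_
  · rcases hsplit with h | h
    · exact hy' (subset_closure (h hy).2)
    · have : x ∈ Q' := ⟨x', hxQ, rfl⟩
      exact (h hx.1) this
  · intro z hz
    by_cases hzQ : z ∈ Q'
    · left; rw [hQ'eq] at hzQ; exact hzQ.2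
    · right; exact hzQ
  · rw [Set.eq_empty_iff_forall_notMem]
    rintro z ⟨hzD, hzOV, hzQc⟩
    exact hzQc (hQ'eq ▸ ⟨hzD, hzOV⟩)

/-- If `K` is compact with at most `m` connected components and `ℋ¹(K) ≤ λ`, and `U ⊆ V`
are open with `δ = dist(U, ∂V) > 0`, then the number of connected components of
`closure V ∩ K` which meet `U ∩ K` is at most `m + λ/δ`. -/
theorem components_count_bound (m : ℕ) (hm : 1 ≤ m) (lam : ℝ) (hlam : 0 ≤ lam)
    (K : Set E2) (hKc : IsCompact K) (hKm : AtMostComponents m K)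
    (hKlen : μH[1] K ≤ ENNReal.ofReal lam)
    (U V : Set E2) (hU : IsOpen U) (hV : IsOpen V) (hUV : U ⊆ V)
    (δ : ℝ) (hδ : 0 < δ)
    (hdist : ∀ x ∈ U, ∀ y ∈ frontier V, δ ≤ dist x y) :
    ∀ comps : Set (Set E2),
      comps = {C : Set E2 |
          (∃ x ∈ closure V ∩ K, C = connectedComponentIn (closure V ∩ K) x) ∧
          (C ∩ (U ∩ K)).Nonempty} →
      comps.Finite ∧ (comps.ncard : ℝ) ≤ m + lam / δ := by
  intro comps hcomps
  obtain ⟨Cf, hCfc, hKeq⟩ := hKm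
  set F : Set E2 := closure V ∩ K with hFdef
  have hFcomp : IsCompact F := hKc.inter_left isClosed_closure
  have hdisj : ∀ C ∈ comps, ∀ C' ∈ comps, (C ∩ C').Nonempty → C = C' := by
    rintro C hC C' hC' ⟨z, hz1, hz2⟩
    rw [hcomps] at hC hC'
    obtain ⟨⟨x₀, hx₀, rfl⟩, -⟩ := hC
    obtain ⟨⟨x₁, hx₁, rfl⟩, -⟩ := hC'
    rw [connectedComponentIn_eq hz1, connectedComponentIn_eq hz2]
  have hrep : ∀ C ∈ comps, ∃ x, x ∈ C ∧ x ∈ U ∧ x ∈ K ∧ C = connectedComponentIn F x := by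
    intro C hC; rw [hcomps] at hC
    obtain ⟨⟨x₀, hx₀, hCeq⟩, ⟨x, hxC, hxU, hxK⟩⟩ := hC
    exact ⟨x, hxC, hxU, hxK,
      hCeq.trans (connectedComponentIn_eq (show x ∈ connectedComponentIn F x₀ from hCeq ▸ hxC))⟩
  set compsA := {C ∈ comps | ∃ i, (Cf i).Nonempty ∧ Cf i ⊆ C} with hAdef
  set compsB := {C ∈ comps | (C ∩ frontier V).Nonempty} with hBdef
  have hcover : comps ⊆ compsA ∪ compsB := by
    intro C hC
    obtain ⟨x, hxC, hxU, hxK, hCeq⟩ := hrep C hC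
    set D := connectedComponentIn K x with hDdef
    have hxD : x ∈ D := mem_connectedComponentIn hxK
    have hDK : D ⊆ K := connectedComponentIn_subset K x
    have hDcomp : IsCompact D := isCompact_cci' hKc x
    have hDpc : IsPreconnected D := isPreconnected_connectedComponentIn
    by_cases hDV : D ⊆ closure V
    · left
      refine ⟨hC, ?_⟩
      obtain ⟨i, hxi⟩ := mem_iUnion.1 (show x ∈ ⋃ i, Cf i from hKeq ▸ hxK)
      refine ⟨i, ⟨x, hxi⟩, ?_⟩
      have hCfK : Cf i ⊆ K := by rw [hKeq]; exact subset_iUnion Cf i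
      have h1 : Cf i ⊆ D := (hCfc i).subset_connectedComponentIn hxi hCfK
      have h2 : D ⊆ C := by
        rw [hCeq]
        exact hDpc.subset_connectedComponentIn hxD fun z hz => ⟨hDV hz, hDK hz⟩
      exact h1.trans h2
    · right
      refine ⟨hC, ?_⟩
      rw [Set.not_subset] at hDV
      obtain ⟨y, hyD, hyV⟩ := hDV
      have hxDV : x ∈ D ∩ closure V := ⟨hxD, subset_closure (hUV hxU)⟩
      obtain ⟨z, hz1, hz2⟩ := bumping' hDcomp hDpc hV hxDV hyD hyV
      refine ⟨z, ?_, hz2⟩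
      have hsub : connectedComponentIn (D ∩ closure V) x ⊆ C := by
        rw [hCeq]
        refine isPreconnected_connectedComponentIn.subset_connectedComponentIn
          (mem_connectedComponentIn hxDV) fun w hw => ?_
        have hw' := connectedComponentIn_subset (D ∩ closure V) x hw
        exact ⟨hw'.2, hDK hw'.1⟩
      exact hsub hz1
  -- compsA bound
  have hgex : ∀ C : compsA, ∃ i : Fin m, (Cf i).Nonempty ∧ Cf i ⊆ (C : Set E2) :=
    fun C => C.2.2
  choose g hg1 hg2 using hgex
  have hginj : Function.Injective g := by
    intro C C' hgg
    have hne : ((C : Set E2) ∩ C').Nonempty := by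
      obtain ⟨w, hw⟩ := hg1 C
      exact ⟨w, hg2 C hw, hg2 C' (hgg ▸ hw)⟩
    exact Subtype.ext (hdisj _ C.2.1 _ C'.2.1 hne)
  haveI hfinA' : Finite ↥compsA := Finite.of_injective g hginj
  have hAfin : compsA.Finite := Set.finite_coe_iff.1 hfinA'
  have hAcard : (compsA.ncard : ℝ) ≤ m := by
    have h1 : Nat.card ↥compsA ≤ m := by
      simpa using Nat.card_le_card_of_injective g hginj
    rw [← Nat.card_coe_set_eq]
    exact_mod_cast h1
  -- compsB bound
  have hBmeas : ∀ C ∈ compsB, ENNReal.ofReal δ ≤ μH[1] C := by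
    rintro C ⟨hCc, ⟨b, hbC, hbfr⟩⟩
    obtain ⟨a, haC, haU, haK, hCeq⟩ := hrep C hCc
    have hpc : IsPreconnected C := hCeq ▸ isPreconnected_connectedComponentIn
    calc ENNReal.ofReal δ ≤ ENNReal.ofReal (dist a b) :=
          ENNReal.ofReal_le_ofReal (hdist a haU b hbfr)
      _ ≤ μH[1] C := hausdorff_ge_dist' hpc haC hbC
  have hfinsetB : ∀ s : Finset (Set E2), ↑s ⊆ compsB → (s.card : ℝ) * δ ≤ lam := by
    intro s hs
    have hdisjs : (↑s : Set (Set E2)).PairwiseDisjoint id := by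
      intro C hC C' hC' hne
      rw [Function.onFun, Set.disjoint_iff_inter_eq_empty]
      by_contra hne2
      exact hne (hdisj C (hs hC).1 C' (hs hC').1 (Set.nonempty_iff_ne_empty.2 hne2))
    have hmeass : ∀ C ∈ s, MeasurableSet (id C) := by
      intro C hC
      obtain ⟨a, -, -, -, hCeq⟩ := hrep C (hs hC).1
      have : IsCompact C := hCeq ▸ isCompact_cci' hFcomp a
      exact this.isClosed.measurableSet
    have hsum : (s.card : ENNReal) * ENNReal.ofReal δ ≤ ENNReal.ofReal lam := by
      calc (s.card : ENNReal) * ENNReal.ofReal δ = ∑ _C ∈ s, ENNReal.ofReal δ := by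
            rw [Finset.sum_const, nsmul_eq_mul]
        _ ≤ ∑ C ∈ s, μH[1] C := Finset.sum_le_sum fun C hC => hBmeas C (hs hC)
        _ = μH[1] (⋃ C ∈ s, C) := (measure_biUnion_finset hdisjs hmeass).symm
        _ ≤ μH[1] K := by
            refine measure_mono ?_
            intro z hz
            obtain ⟨C, hC, hzC⟩ := Set.mem_iUnion₂.1 hz
            obtain ⟨a, -, -, -, hCeq⟩ := hrep C (hs hC).1
            exact (connectedComponentIn_subset F a (hCeq ▸ hzC)).2
        _ ≤ ENNReal.ofReal lam := hKlen
    have h2 : ENNReal.ofReal ((s.card : ℝ) * δ) ≤ ENNReal.ofReal lam := by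
      rw [ENNReal.ofReal_mul (Nat.cast_nonneg s.card), ENNReal.ofReal_natCast]
      exact hsum
    exact (ENNReal.ofReal_le_ofReal_iff hlam).1 h2
  have hBfin : compsB.Finite := by
    by_contra hinf
    obtain ⟨t, hts, htc⟩ :=
      Set.Infinite.exists_subset_card_eq hinf (⌈lam / δ⌉₊ + 1)
    have h1 := hfinsetB t hts
    rw [htc] at h1
    have h2 : ((⌈lam / δ⌉₊ : ℝ) + 1) ≤ lam / δ := by
      rw [le_div_iff₀ hδ]; push_cast at h1 ⊢; linarith
    have h3 : lam / δ ≤ (⌈lam / δ⌉₊ : ℝ) := Nat.le_ceil _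
    linarith
  have hBcard : (compsB.ncard : ℝ) ≤ lam / δ := by
    have h1 := hfinsetB hBfin.toFinset (by simp)
    rw [Set.ncard_eq_toFinset_card _ hBfin, le_div_iff₀ hδ]
    exact h1
  have hABfin : (compsA ∪ compsB).Finite := hAfin.union hBfin
  have hfin : comps.Finite := hABfin.subset hcover
  refine ⟨hfin, ?_⟩
  calc (comps.ncard : ℝ) ≤ ((compsA ∪ compsB).ncard : ℝ) := by
        exact_mod_cast Set.ncard_le_ncard hcover hABfin
    _ ≤ (compsA.ncard : ℝ) + compsB.ncard := by
        exact_mod_cast Set.ncard_union_le _ _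
    _ ≤ m + lam / δ := add_le_add hAcard hBcard
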